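/- Let H be a densely defined self-adjoint operator on ℋ, and let ρ be a Hilbert–Schmidt operator with ρ* = ρ such that ρ maps ℋ into Dom H and Hρ is an (everywhere-defined) Hilbert–Schmidt operator. Then ρ ∈ Dom 𝐇; in particular, for such an initial condition ρ(0) = ρ the Liouville–von Neumann evolution ρ(t) = U(t) ρ U(t)* satisfies i (d/dt)ρ(t) = 𝐇ρ(t) in Hilbert–Schmidt norm for all t ∈ ℝ. -/

import Mathlib

open Filter Topology ContinuousLinearMap
open scoped InnerProductSpace ENNReal NNReal

noncomputable section

namespace LiouvilleFormalization

variable {H : Type*} [NormedAddCommGroup H] [InnerProductSpace ℂ H] [CompleteSpace H]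

/-- `A` is Hilbert–Schmidt with respect to the orthonormal basis `e`
(equivalently, with respect to every orthonormal basis). -/
def IsHS (e : HilbertBasis ℕ ℂ H) (A : H →L[ℂ] H) : Prop :=
  Summable fun n => ‖A (e n)‖ ^ 2

/-- The Hilbert–Schmidt norm of `A` computed in the orthonormal basis `e`. -/
def hsNorm (e : HilbertBasis ℕ ℂ H) (A : H →L[ℂ] H) : ℝ :=
  Real.sqrt (∑' n, ‖A (e n)‖ ^ 2)

/-- The Hilbert–Schmidt inner product `⟨A, B⟩_HS = Σₙ ⟨A eₙ, B eₙ⟩`. -/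
def hsInner (e : HilbertBasis ℕ ℂ H) (A B : H →L[ℂ] H) : ℂ :=
  ∑' n, (inner ℂ (A (e n)) (B (e n)) : ℂ)

/-- The conjugation superoperator `A ↦ U(t) A U(t)*`. -/
def conjSup (U : ℝ → H →L[ℂ] H) (t : ℝ) (A : H →L[ℂ] H) : H →L[ℂ] H :=
  U t ∘L A ∘L adjoint (U t)

/-- `U` is a strongly continuous one-parameter unitary group. -/
structure IsUnitaryGroup (U : ℝ → H →L[ℂ] H) : Prop where
  map_zero : U 0 = 1
  map_add : ∀ t s : ℝ, U (t + s) = U t ∘L U s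
  unitary_left : ∀ t : ℝ, adjoint (U t) ∘L U t = 1
  unitary_right : ∀ t : ℝ, U t ∘L adjoint (U t) = 1
  strong_continuous : ∀ ψ : H, Continuous fun t : ℝ => U t ψ

/-- A densely defined operator is self-adjoint if it coincides with its adjoint. -/
def IsSelfAdjointOp (T : H →ₗ.[ℂ] H) : Prop :=
  Dense (T.domain : Set H) ∧ T.adjoint = T

/-- `T` is the infinitesimal generator of the unitary group `U`, i.e. `U(t) = e^{-itT}`:
the domain of `T` is exactly the set of vectors where the strong derivative at `t = 0`
exists, and there the derivative equals `-i T ψ`. -/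
structure IsGenerator (U : ℝ → H →L[ℂ] H) (T : H →ₗ.[ℂ] H) : Prop where
  mem_dom : ∀ ψ : H,
    ψ ∈ T.domain ↔ ∃ L : H, Tendsto (fun t : ℝ => t⁻¹ • (U t ψ - ψ)) (𝓝[≠] 0) (𝓝 L)
  deriv : ∀ ψ : T.domain,
    Tendsto (fun t : ℝ => t⁻¹ • (U t ψ - (ψ : H))) (𝓝[≠] 0) (𝓝 ((-Complex.I) • T ψ))

/-- `L = 𝐇 A`: membership of `A` in the domain of the Liouville superoperator `𝐇`
generated by `U`, together with the value `𝐇 A = L`: the difference quotient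
`(U(t) A U(t)* - A)/t` converges in Hilbert–Schmidt norm to `-i L`. -/
def HasLiouville (e : HilbertBasis ℕ ℂ H) (U : ℝ → H →L[ℂ] H) (A L : H →L[ℂ] H) : Prop :=
  IsHS e A ∧ IsHS e L ∧
    Tendsto (fun t : ℝ => hsNorm e (t⁻¹ • (conjSup U t A - A) - (-Complex.I) • L))
      (𝓝[≠] 0) (𝓝 0)

/-- The commutator `[T, A] ψ = T(Aψ) - A(Tψ)` on the domain of `T`, for `A` mapping
`Dom T` into itself. -/
def commAt (T : H →ₗ.[ℂ] H) (A : H →L[ℂ] H)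
    (hm : ∀ x : T.domain, (A x : H) ∈ T.domain) (ψ : T.domain) : H :=
  T ⟨A ψ, hm ψ⟩ - A (T ψ)

section Aux
variable (e : HilbertBasis ℕ ℂ H)

/-- HS sum in `ℝ≥0∞`. -/
def hsSum (e : HilbertBasis ℕ ℂ H) (A : H →L[ℂ] H) : ℝ≥0∞ :=
  ∑' n, ((‖A (e n)‖₊ : ℝ≥0∞)) ^ 2

variable (e : HilbertBasis ℕ ℂ H)

lemma isHS_iff_hsSum {A : H →L[ℂ] H} : IsHS e A ↔ hsSum e A ≠ ∞ := by
  rw [IsHS, hsSum]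
  have h1 : (fun n => ‖A (e n)‖ ^ 2) = fun n => ((‖A (e n)‖₊ ^ 2 : ℝ≥0) : ℝ) := by
    funext n; simp
  rw [h1, NNReal.summable_coe, ← ENNReal.tsum_coe_ne_top_iff_summable]
  simp [ENNReal.coe_pow]

lemma hsNorm_eq_hsSum (A : H →L[ℂ] H) : hsNorm e A = Real.sqrt (hsSum e A).toReal := by
  rw [hsNorm, hsSum,
    ENNReal.tsum_toReal_eq (fun a => ENNReal.pow_ne_top ENNReal.coe_ne_top)]
  congr 1

lemma nn_parseval (x : H) :
    ((‖x‖₊ : ℝ≥0∞)) ^ 2 = ∑' m, ((‖(⟪e m, x⟫_ℂ)‖₊ : ℝ≥0∞)) ^ 2 := by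
  have h := e.hasSum_inner_mul_inner x x
  have e1 : (fun m => ⟪x, e m⟫_ℂ * ⟪e m, x⟫_ℂ)
      = fun m => ((‖(⟪e m, x⟫_ℂ)‖ ^ 2 : ℝ) : ℂ) := by
    funext m
    rw [← inner_conj_symm x (e m), RCLike.conj_mul]
    norm_cast
  rw [e1, inner_self_eq_norm_sq_to_K] at h
  have h3 : HasSum (fun m => (‖(⟪e m, x⟫_ℂ)‖ ^ 2 : ℝ)) (‖x‖ ^ 2 : ℝ) := by
    apply Complex.hasSum_ofReal.mp
    convert h using 2
    all_goals norm_cast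
  have h4 := ENNReal.ofReal_tsum_of_nonneg (fun m => by positivity) h3.summable
  rw [h3.tsum_eq] at h4
  calc ((‖x‖₊ : ℝ≥0∞)) ^ 2 = ENNReal.ofReal (‖x‖ ^ 2) := by
        rw [ENNReal.ofReal_pow (norm_nonneg x), ← coe_nnnorm, ENNReal.ofReal_coe_nnreal]
      _ = ∑' m, ((‖(⟪e m, x⟫_ℂ)‖₊ : ℝ≥0∞)) ^ 2 := by
        rw [h4]; apply tsum_congr; intro m
        rw [ENNReal.ofReal_pow (norm_nonneg _), ← coe_nnnorm, ENNReal.ofReal_coe_nnreal]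


lemma norm_apply_of_star_comp_eq_one {V : H →L[ℂ] H} (hV : adjoint V ∘L V = 1) (x : H) :
    ‖V x‖ = ‖x‖ := by
  have h : ⟪V x, V x⟫_ℂ = ⟪x, x⟫_ℂ := by
    rw [← adjoint_inner_left]
    have : (adjoint V) (V x) = (adjoint V ∘L V) x := rfl
    rw [this, hV]
    rfl
  rw [@norm_eq_sqrt_re_inner ℂ, @norm_eq_sqrt_re_inner ℂ _ _ _ _ x, h]

lemma hsSum_adjoint (A : H →L[ℂ] H) : hsSum e (adjoint A) = hsSum e A := by
  have key : ∀ C : H →L[ℂ] H, hsSum e C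
      = ∑' n, ∑' m, ((‖(⟪e m, C (e n)⟫_ℂ)‖₊ : ℝ≥0∞)) ^ 2 := by
    intro C
    exact tsum_congr fun n => nn_parseval e (C (e n))
  have term : ∀ n m : ℕ, ((‖(⟪e m, (adjoint A) (e n)⟫_ℂ)‖₊ : ℝ≥0∞)) ^ 2
      = ((‖(⟪e n, A (e m)⟫_ℂ)‖₊ : ℝ≥0∞)) ^ 2 := by
    intro n m
    have hnorm : ‖(⟪e m, (adjoint A) (e n)⟫_ℂ)‖ = ‖(⟪e n, A (e m)⟫_ℂ)‖ := by
      rw [norm_inner_symm, adjoint_inner_left]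
    congr 2
    exact NNReal.eq hnorm
  rw [key, key]
  simp only [term]
  exact ENNReal.tsum_comm

lemma hsSum_isometry_left {V : H →L[ℂ] H} (hV : ∀ x : H, ‖V x‖ = ‖x‖) (A : H →L[ℂ] H) :
    hsSum e (V ∘L A) = hsSum e A := by
  apply tsum_congr; intro n
  have : ‖(V ∘L A) (e n)‖₊ = ‖A (e n)‖₊ := by
    ext; exact hV _
  rw [this]

lemma hsSum_comp_unitary_right {V : H →L[ℂ] H} (h1 : adjoint V ∘L V = 1)
    (h2 : V ∘L adjoint V = 1) (A : H →L[ℂ] H) :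
    hsSum e (A ∘L V) = hsSum e A := by
  rw [← hsSum_adjoint e (A ∘L V), adjoint_comp]
  rw [hsSum_isometry_left e (norm_apply_of_star_comp_eq_one (by rw [adjoint_adjoint]; exact h2))]
  exact hsSum_adjoint e A


lemma isHS_iff_memℓp {A : H →L[ℂ] H} : IsHS e A ↔ Memℓp (fun n => A (e n)) 2 := by
  rw [memℓp_gen_iff (by norm_num : (0:ℝ) < (2 : ℝ≥0∞).toReal)]
  have heq : (fun n => ‖A (e n)‖ ^ ((2 : ℝ≥0∞)).toReal) = fun n => ‖A (e n)‖ ^ 2 := by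
    funext n
    rw [ENNReal.toReal_ofNat, show ((2:ℝ)) = ((2:ℕ):ℝ) by norm_num, Real.rpow_natCast]
  rw [heq, IsHS]

lemma memℓp_congr {f g : ℕ → H} (h : ∀ n, f n = g n) (hf : Memℓp f 2) : Memℓp g 2 :=
  (funext h : f = g) ▸ hf

lemma lp_norm_eq (f : lp (fun _ : ℕ => H) 2) : ‖f‖ = Real.sqrt (∑' n, ‖f n‖ ^ 2) := by
  rw [lp.norm_eq_tsum_rpow (by norm_num) f, Real.sqrt_eq_rpow]
  congr 1
  · apply tsum_congr; intro n
    rw [ENNReal.toReal_ofNat, show ((2:ℝ)) = ((2:ℕ):ℝ) by norm_num, Real.rpow_natCast]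

lemma hsNorm_eq_lp (A : H →L[ℂ] H) (hA : IsHS e A) :
    hsNorm e A = ‖(⟨fun n => A (e n), (isHS_iff_memℓp e).1 hA⟩ : lp (fun _ : ℕ => H) 2)‖ := by
  rw [lp_norm_eq]; rfl

lemma hsNorm_add_le {A B : H →L[ℂ] H} (hA : IsHS e A) (hB : IsHS e B) :
    hsNorm e (A + B) ≤ hsNorm e A + hsNorm e B := by
  have hAB : IsHS e (A + B) := by
    rw [isHS_iff_memℓp]
    exact memℓp_congr (fun n => by simp)
      (((isHS_iff_memℓp e).1 hA).add ((isHS_iff_memℓp e).1 hB))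
  rw [hsNorm_eq_lp e A hA, hsNorm_eq_lp e B hB, hsNorm_eq_lp e _ hAB]
  have : (⟨fun n => (A + B) (e n), (isHS_iff_memℓp e).1 hAB⟩ : lp (fun _ : ℕ => H) 2)
      = ⟨fun n => A (e n), (isHS_iff_memℓp e).1 hA⟩ + ⟨fun n => B (e n), (isHS_iff_memℓp e).1 hB⟩ := by
    apply Subtype.ext
    rw [lp.coeFn_add]
    funext n
    simp
  rw [this]
  exact norm_add_le _ _


/-- Dominated convergence for HS norms. -/
lemma tendsto_hsNorm_zero {F : ℝ → H →L[ℂ] H} {g : ℕ → ℝ}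
    (hg : Summable fun n => g n ^ 2)
    (hpt : ∀ n : ℕ, Tendsto (fun t => F t (e n)) (𝓝[≠] (0:ℝ)) (𝓝 0))
    (hbd : ∀ᶠ t in 𝓝[≠] (0:ℝ), ∀ n, ‖F t (e n)‖ ≤ g n) :
    Tendsto (fun t => hsNorm e (F t)) (𝓝[≠] (0:ℝ)) (𝓝 0) := by
  have key : Tendsto (fun t => ∑' n, ‖F t (e n)‖ ^ 2) (𝓝[≠] (0:ℝ))
      (𝓝 (∑' n : ℕ, (0:ℝ))) := by
    apply tendsto_tsum_of_dominated_convergence hg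
    · intro n
      have := ((hpt n).norm).pow 2
      simpa using this
    · filter_upwards [hbd] with t ht n
      rw [Real.norm_eq_abs, abs_of_nonneg (by positivity)]
      exact pow_le_pow_left₀ (norm_nonneg _) (ht n) 2
  rw [tsum_zero] at key
  have := (Real.continuous_sqrt.tendsto' 0 0 Real.sqrt_zero).comp key
  simpa [hsNorm, Function.comp_def] using this

variable {T : H →ₗ.[ℂ] H} {U : ℝ → H →L[ℂ] H}

lemma norm_U_apply (hU : IsUnitaryGroup U) (t : ℝ) (x : H) : ‖U t x‖ = ‖x‖ :=
  norm_apply_of_star_comp_eq_one (hU.unitary_left t) x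

lemma hasDerivAt_U (hU : IsUnitaryGroup U) (hgen : IsGenerator U T) (ψ : T.domain) (s : ℝ) :
    HasDerivAt (fun u : ℝ => U u (ψ : H)) (U s ((-Complex.I) • T ψ)) s := by
  rw [hasDerivAt_iff_tendsto_slope]
  have hmap : Tendsto (fun t : ℝ => t - s) (𝓝[≠] s) (𝓝[≠] (0:ℝ)) := by
    apply Tendsto.inf
    · simpa using ((continuous_sub_right s).tendsto s)
    · exact tendsto_principal_principal.2 fun x hx => sub_ne_zero.2 hx
  have h1 : Tendsto (fun t : ℝ => (t - s)⁻¹ • (U (t - s) (ψ : H) - (ψ : H)))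
      (𝓝[≠] s) (𝓝 ((-Complex.I) • T ψ)) := (hgen.deriv ψ).comp hmap
  have h2 := ((U s).continuous.tendsto _).comp h1
  have heq : (fun t : ℝ => U s ((t - s)⁻¹ • (U (t - s) (ψ : H) - (ψ : H))))
      = slope (fun u : ℝ => U u (ψ : H)) s := by
    funext t
    rw [slope_def_module]
    rw [map_smul_of_tower]
    congr 1
    rw [map_sub]
    congr 1
    have : U s (U (t - s) (ψ : H)) = (U s ∘L U (t - s)) (ψ : H) := rfl
    rw [this, ← hU.map_add]
    congr 1
    ring
  rw [← heq]
  exact h2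

lemma norm_U_sub_le (hU : IsUnitaryGroup U) (hgen : IsGenerator U T) (ψ : T.domain) (t : ℝ) :
    ‖U t (ψ : H) - (ψ : H)‖ ≤ ‖T ψ‖ * |t| := by
  have key := Convex.norm_image_sub_le_of_norm_hasDerivWithin_le
    (f := fun u : ℝ => U u (ψ : H)) (f' := fun u : ℝ => U u ((-Complex.I) • T ψ))
    (s := Set.univ) (C := ‖T ψ‖)
    (fun x _ => (hasDerivAt_U hU hgen ψ x).hasDerivWithinAt)
    (fun x _ => by
      rw [norm_U_apply hU, norm_smul]
      simp)
    convex_univ (Set.mem_univ (0:ℝ)) (Set.mem_univ t)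
  have h0 : U (0:ℝ) (ψ : H) = (ψ : H) := by rw [hU.map_zero]; rfl
  have key' : ‖U t (ψ : H) - U (0:ℝ) (ψ : H)‖ ≤ ‖T ψ‖ * |t - 0| := by
    simpa [Real.norm_eq_abs] using key
  rw [h0, sub_zero] at key'
  exact key'

lemma norm_quot_le (hU : IsUnitaryGroup U) (hgen : IsGenerator U T) (ψ : T.domain)
    {t : ℝ} (ht : t ≠ 0) :
    ‖t⁻¹ • (U t (ψ : H) - (ψ : H))‖ ≤ ‖T ψ‖ := by
  rw [norm_smul, Real.norm_eq_abs, abs_inv]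
  calc |t|⁻¹ * ‖U t (ψ : H) - (ψ : H)‖ ≤ |t|⁻¹ * (‖T ψ‖ * |t|) := by
        apply mul_le_mul_of_nonneg_left (norm_U_sub_le hU hgen ψ t)
        positivity
    _ = ‖T ψ‖ := by
        field_simp



lemma hsNorm_nonneg (A : H →L[ℂ] H) : 0 ≤ hsNorm e A := Real.sqrt_nonneg _

lemma hsNorm_congr {A B : H →L[ℂ] H} (hAB : hsSum e A = hsSum e B) :
    hsNorm e A = hsNorm e B := by
  rw [hsNorm_eq_hsSum, hsNorm_eq_hsSum, hAB]

lemma hsNorm_adjoint (A : H →L[ℂ] H) : hsNorm e (adjoint A) = hsNorm e A :=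
  hsNorm_congr e (hsSum_adjoint e A)

lemma isHS_adjoint {A : H →L[ℂ] H} (hA : IsHS e A) : IsHS e (adjoint A) := by
  rw [isHS_iff_hsSum] at *
  rwa [hsSum_adjoint]

lemma isHS_isometry_left {V : H →L[ℂ] H} (hV : ∀ x : H, ‖V x‖ = ‖x‖) {A : H →L[ℂ] H}
    (hA : IsHS e A) : IsHS e (V ∘L A) := by
  rw [isHS_iff_hsSum] at *
  rwa [hsSum_isometry_left e hV]

lemma isHS_comp_unitary_right {V : H →L[ℂ] H} (h1 : adjoint V ∘L V = 1)
    (h2 : V ∘L adjoint V = 1) {A : H →L[ℂ] H} (hA : IsHS e A) : IsHS e (A ∘L V) := by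
  rw [isHS_iff_hsSum] at *
  rwa [hsSum_comp_unitary_right e h1 h2]

lemma isHS_add {A B : H →L[ℂ] H} (hA : IsHS e A) (hB : IsHS e B) : IsHS e (A + B) := by
  rw [isHS_iff_memℓp] at *
  exact memℓp_congr (fun n => by simp) (hA.add hB)

lemma isHS_sub {A B : H →L[ℂ] H} (hA : IsHS e A) (hB : IsHS e B) : IsHS e (A - B) := by
  rw [isHS_iff_memℓp] at *
  exact memℓp_congr (fun n => by simp) (hA.sub hB)

lemma isHS_smul (c : ℂ) {A : H →L[ℂ] H} (hA : IsHS e A) : IsHS e (c • A) := by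
  rw [isHS_iff_memℓp] at *
  exact memℓp_congr (fun n => by simp) (hA.const_smul c)

lemma isHS_rsmul (r : ℝ) {A : H →L[ℂ] H} (hA : IsHS e A) : IsHS e (r • A) := by
  rw [isHS_iff_memℓp] at *
  exact memℓp_congr (fun n => by simp) (hA.const_smul r)


lemma adjoint_rsmul (r : ℝ) (A : H →L[ℂ] H) : adjoint (r • A) = r • adjoint A := by
  simp [← star_eq_adjoint, star_smul]

lemma adjoint_csmul (c : ℂ) (A : H →L[ℂ] H) : adjoint (c • A) = star c • adjoint A := by
  simp [← star_eq_adjoint, star_smul]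

lemma adjoint_sub' (A B : H →L[ℂ] H) : adjoint (A - B) = adjoint A - adjoint B := by
  simp [← star_eq_adjoint]

lemma adjoint_one' : adjoint (1 : H →L[ℂ] H) = 1 := by
  simp [← star_eq_adjoint]

lemma conjSup_isHS (hU : IsUnitaryGroup U) (t : ℝ) {A : H →L[ℂ] H} (hA : IsHS e A) :
    IsHS e (conjSup U t A) := by
  have h1 : adjoint (adjoint (U t)) ∘L adjoint (U t) = 1 := by
    rw [adjoint_adjoint]; exact hU.unitary_right t
  have h2 : adjoint (U t) ∘L adjoint (adjoint (U t)) = 1 := by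
    rw [adjoint_adjoint]; exact hU.unitary_left t
  exact isHS_isometry_left e (norm_U_apply hU t) (isHS_comp_unitary_right e h1 h2 hA)

lemma conjSup_hsNorm (hU : IsUnitaryGroup U) (t : ℝ) (A : H →L[ℂ] H) :
    hsNorm e (conjSup U t A) = hsNorm e A := by
  have h1 : adjoint (adjoint (U t)) ∘L adjoint (U t) = 1 := by
    rw [adjoint_adjoint]; exact hU.unitary_right t
  have h2 : adjoint (U t) ∘L adjoint (adjoint (U t)) = 1 := by
    rw [adjoint_adjoint]; exact hU.unitary_left t
  apply hsNorm_congr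
  rw [conjSup, hsSum_isometry_left e (norm_U_apply hU t), hsSum_comp_unitary_right e h1 h2]

lemma conjSup_add_eq (hU : IsUnitaryGroup U) (a b : ℝ) (A : H →L[ℂ] H) :
    conjSup U (a + b) A = conjSup U a (conjSup U b A) := by
  unfold conjSup
  rw [hU.map_add, adjoint_comp]
  ext φ
  simp

lemma conjSup_pull (t : ℝ) (c : ℝ) (A A' Lop : H →L[ℂ] H) :
    c • (conjSup U t A - conjSup U t A') - (-Complex.I) • conjSup U t Lop
      = conjSup U t (c • (A - A') - (-Complex.I) • Lop) := by
  ext φ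
  simp [conjSup, map_sub, map_smul_of_tower]

set_option maxHeartbeats 1000000 in
set_option synthInstance.maxHeartbeats 500000 in
lemma decomp_aux (t : ℝ) (Ut ρ B Bs : H →L[ℂ] H) :
    t⁻¹ • ((Ut ∘L (ρ ∘L adjoint Ut)) - ρ) - (-Complex.I) • (B - Bs)
      = ((t⁻¹ • (Ut ∘L ρ - ρ) + Complex.I • B) ∘L adjoint Ut)
        + Complex.I • (B - B ∘L adjoint Ut)
        + (ρ ∘L (t⁻¹ • (adjoint Ut - 1)) - Complex.I • Bs) := by
  rw [neg_smul, sub_neg_eq_add]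
  ext φ
  simp only [add_apply, sub_apply, smul_apply, comp_apply, one_apply_eq_self, coe_smul',
    Pi.smul_apply, coe_sub', Pi.sub_apply, map_sub, map_smul_of_tower, smul_sub, smul_add]
  abel

end Aux

set_option maxHeartbeats 2000000 in
set_option synthInstance.maxHeartbeats 500000 in
/-- if `ρ` is a self-adjoint Hilbert–Schmidt operator mapping `ℋ` into
`Dom H` with `Hρ` an everywhere-defined Hilbert–Schmidt operator, then `ρ ∈ Dom 𝐇`, and
the evolution `ρ(t) = U(t) ρ U(t)*` satisfies the Liouville–von Neumann equation
`i dρ(t)/dt = 𝐇 ρ(t)` in Hilbert–Schmidt norm for all `t ∈ ℝ`. -/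
theorem statement19 (e : HilbertBasis ℕ ℂ H) (T : H →ₗ.[ℂ] H) (hT : IsSelfAdjointOp T)
    (U : ℝ → H →L[ℂ] H) (hU : IsUnitaryGroup U) (hgen : IsGenerator U T)
    (ρ : H →L[ℂ] H) (hρHS : IsHS e ρ) (hρsa : adjoint ρ = ρ)
    (h : ∀ φ : H, ρ φ ∈ T.domain)
    (B : H →L[ℂ] H) (hBHS : IsHS e B) (hB : ∀ φ : H, B φ = T ⟨ρ φ, h φ⟩) :
    (∃ L : H →L[ℂ] H, HasLiouville e U ρ L) ∧
    ∀ t : ℝ, ∃ Lt : H →L[ℂ] H, HasLiouville e U (conjSup U t ρ) Lt ∧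
      Tendsto
        (fun s : ℝ =>
          hsNorm e (s⁻¹ • (conjSup U (t + s) ρ - conjSup U t ρ) - (-Complex.I) • Lt))
        (𝓝[≠] 0) (𝓝 0) := by
  classical
  set Bs : H →L[ℂ] H := adjoint B with hBsdef
  set L : H →L[ℂ] H := B - Bs with hLdef
  have hBsHS : IsHS e Bs := isHS_adjoint e hBHS
  have hLHS : IsHS e L := isHS_sub e hBHS hBsHS
  -- the central difference quotient operator
  set G : ℝ → H →L[ℂ] H := fun t => t⁻¹ • (U t ∘L ρ - ρ) + Complex.I • B with hGdef
  have hGapp : ∀ (t : ℝ) (x : H), G t x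
      = t⁻¹ • (U t (ρ x) - ρ x) + Complex.I • B x := by
    intro t x; simp [hGdef]
  have hBn : ∀ n : ℕ, T ⟨ρ (e n), h (e n)⟩ = B (e n) := fun n => (hB (e n)).symm
  have hGHS : ∀ t : ℝ, IsHS e (G t) := by
    intro t
    apply isHS_add e (isHS_rsmul e _ (isHS_sub e ?_ hρHS)) (isHS_smul e _ hBHS)
    exact isHS_isometry_left e (norm_U_apply hU t) hρHS
  have keyG : Tendsto (fun t => hsNorm e (G t)) (𝓝[≠] (0:ℝ)) (𝓝 0) := by
    apply tendsto_hsNorm_zero e (g := fun n => 2 * ‖B (e n)‖)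
    · have := hBHS.mul_left 4
      apply this.congr
      intro n; ring
    · intro n
      have hd := hgen.deriv ⟨ρ (e n), h (e n)⟩
      rw [hBn n] at hd
      have hsum := hd.add (tendsto_const_nhds (x := Complex.I • B (e n))
        (f := 𝓝[≠] (0:ℝ)))
      have hz : (-Complex.I) • B (e n) + Complex.I • B (e n) = 0 := by
        rw [← add_smul]; simp
      rw [hz] at hsum
      apply hsum.congr
      intro t
      rw [hGapp]
    · filter_upwards [self_mem_nhdsWithin] with t ht n
      rw [hGapp]
      refine (norm_add_le _ _).trans ?_
      have h1 : ‖t⁻¹ • (U t (ρ (e n)) - ρ (e n))‖ ≤ ‖B (e n)‖ := by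
        have := norm_quot_le hU hgen ⟨ρ (e n), h (e n)⟩ (t := t) ht
        rwa [hBn n] at this
      have h2 : ‖Complex.I • B (e n)‖ = ‖B (e n)‖ := by
        rw [norm_smul]; simp
      rw [h2]; linarith
  -- three pieces
  set X : ℝ → H →L[ℂ] H := fun t => G t ∘L adjoint (U t) with hXdef
  set Y : ℝ → H →L[ℂ] H := fun t => Complex.I • (B - B ∘L adjoint (U t)) with hYdef
  set Z : ℝ → H →L[ℂ] H :=
    fun t => ρ ∘L (t⁻¹ • (adjoint (U t) - 1)) - Complex.I • Bs with hZdef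
  have hadj1 : ∀ t : ℝ, adjoint (adjoint (U t)) ∘L adjoint (U t) = 1 := by
    intro t; rw [adjoint_adjoint]; exact hU.unitary_right t
  have hadj2 : ∀ t : ℝ, adjoint (U t) ∘L adjoint (adjoint (U t)) = 1 := by
    intro t; rw [adjoint_adjoint]; exact hU.unitary_left t
  have hXHS : ∀ t : ℝ, IsHS e (X t) :=
    fun t => isHS_comp_unitary_right e (hadj1 t) (hadj2 t) (hGHS t)
  have hYHS : ∀ t : ℝ, IsHS e (Y t) := by
    intro t
    exact isHS_smul e _ (isHS_sub e hBHS
      (isHS_comp_unitary_right e (hadj1 t) (hadj2 t) hBHS))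
  have adjZ : ∀ t : ℝ, adjoint (Z t) = G t := by
    intro t
    rw [hZdef, hGdef]
    simp only [adjoint_sub', adjoint_comp, adjoint_rsmul, adjoint_csmul, adjoint_one',
      adjoint_adjoint, hρsa, hBsdef]
    simp [smul_comp, sub_comp, one_def]
  have hZHS : ∀ t : ℝ, IsHS e (Z t) := by
    intro t
    have := isHS_adjoint e (hGHS t)
    rw [← adjZ t, adjoint_adjoint] at this
    exact this
  have hnX : ∀ t : ℝ, hsNorm e (X t) = hsNorm e (G t) := by
    intro t
    exact hsNorm_congr e (hsSum_comp_unitary_right e (hadj1 t) (hadj2 t) (G t))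
  have hnZ : ∀ t : ℝ, hsNorm e (Z t) = hsNorm e (G t) := by
    intro t
    rw [← adjZ t, hsNorm_adjoint]
  -- Y piece via adjoint
  have adjY : ∀ t : ℝ, adjoint (Y t) = (-Complex.I) • (Bs - U t ∘L Bs) := by
    intro t
    rw [hYdef]
    simp only [adjoint_csmul, adjoint_sub', adjoint_comp, adjoint_adjoint, hBsdef]
    congr 1
    simp [Complex.ext_iff]
  have keyY : Tendsto (fun t => hsNorm e (Y t)) (𝓝[≠] (0:ℝ)) (𝓝 0) := by
    have keyY' : Tendsto (fun t => hsNorm e ((-Complex.I) • (Bs - U t ∘L Bs)))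
        (𝓝[≠] (0:ℝ)) (𝓝 0) := by
      apply tendsto_hsNorm_zero e (g := fun n => 2 * ‖Bs (e n)‖)
      · have := hBsHS.mul_left 4
        apply this.congr
        intro n; ring
      · intro n
        have hc : Tendsto (fun t : ℝ => U t (Bs (e n))) (𝓝[≠] (0:ℝ)) (𝓝 (Bs (e n))) := by
          have := ((hU.strong_continuous (Bs (e n))).tendsto 0).mono_left
            (nhdsWithin_le_nhds (s := ({0}ᶜ : Set ℝ)))
          rwa [hU.map_zero, one_apply_eq_self] at this
        have := ((tendsto_const_nhds (x := Bs (e n)) (f := 𝓝[≠] (0:ℝ))).sub hc).const_smul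
          (-Complex.I)
        rw [sub_self, smul_zero] at this
        apply this.congr
        intro t; simp
      · filter_upwards [self_mem_nhdsWithin] with t ht n
        have : ‖((-Complex.I) • (Bs - U t ∘L Bs)) (e n)‖ = ‖Bs (e n) - U t (Bs (e n))‖ := by
          simp [norm_smul]
        rw [this]
        refine (norm_sub_le _ _).trans ?_
        rw [norm_U_apply hU]
        linarith [norm_nonneg (Bs (e n))]
    apply keyY'.congr
    intro t
    rw [← adjY t, hsNorm_adjoint]
  -- decomposition
  have decomp : ∀ t : ℝ,
      t⁻¹ • (conjSup U t ρ - ρ) - (-Complex.I) • L = X t + Y t + Z t := by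
    intro t
    exact decomp_aux t (U t) ρ B Bs
  -- main convergence at t = 0
  have main0 : Tendsto
      (fun t : ℝ => hsNorm e (t⁻¹ • (conjSup U t ρ - ρ) - (-Complex.I) • L))
      (𝓝[≠] (0:ℝ)) (𝓝 0) := by
    have hXlim : Tendsto (fun t => hsNorm e (X t)) (𝓝[≠] (0:ℝ)) (𝓝 0) := by
      apply keyG.congr; intro t; rw [hnX]
    have hZlim : Tendsto (fun t => hsNorm e (Z t)) (𝓝[≠] (0:ℝ)) (𝓝 0) := by
      apply keyG.congr; intro t; rw [hnZ]
    have hsumlim := (hXlim.add keyY).add hZlim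
    rw [add_zero, add_zero] at hsumlim
    apply squeeze_zero (fun t => hsNorm_nonneg e _) ?_ hsumlim
    intro t
    rw [decomp t]
    calc hsNorm e (X t + Y t + Z t)
        ≤ hsNorm e (X t + Y t) + hsNorm e (Z t) :=
          hsNorm_add_le e (isHS_add e (hXHS t) (hYHS t)) (hZHS t)
      _ ≤ hsNorm e (X t) + hsNorm e (Y t) + hsNorm e (Z t) := by
          have := hsNorm_add_le e (hXHS t) (hYHS t)
          linarith
  refine ⟨⟨L, hρHS, hLHS, main0⟩, ?_⟩
  intro t
  refine ⟨conjSup U t L, ⟨conjSup_isHS e hU t hρHS, conjSup_isHS e hU t hLHS, ?_⟩, ?_⟩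
  · -- HasLiouville for the evolved state
    have heq : ∀ s : ℝ,
        s⁻¹ • (conjSup U s (conjSup U t ρ) - conjSup U t ρ) - (-Complex.I) • conjSup U t L
          = conjSup U t (s⁻¹ • (conjSup U s ρ - ρ) - (-Complex.I) • L) := by
      intro s
      rw [← conjSup_pull]
      have h2 : conjSup U s (conjSup U t ρ) = conjSup U t (conjSup U s ρ) := by
        rw [← conjSup_add_eq hU, ← conjSup_add_eq hU, add_comm]
      rw [h2]
    have : (fun s : ℝ => hsNorm e
        (s⁻¹ • (conjSup U s (conjSup U t ρ) - conjSup U t ρ) - (-Complex.I) • conjSup U t L))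
        = fun s : ℝ => hsNorm e (s⁻¹ • (conjSup U s ρ - ρ) - (-Complex.I) • L) := by
      funext s
      rw [heq s, conjSup_hsNorm e hU]
    rw [this]
    exact main0
  · have heq : ∀ s : ℝ,
        s⁻¹ • (conjSup U (t + s) ρ - conjSup U t ρ) - (-Complex.I) • conjSup U t L
          = conjSup U t (s⁻¹ • (conjSup U s ρ - ρ) - (-Complex.I) • L) := by
      intro s
      rw [← conjSup_pull, conjSup_add_eq hU t s ρ]
    have : (fun s : ℝ => hsNorm e
        (s⁻¹ • (conjSup U (t + s) ρ - conjSup U t ρ) - (-Complex.I) • conjSup U t L))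
        = fun s : ℝ => hsNorm e (s⁻¹ • (conjSup U s ρ - ρ) - (-Complex.I) • L) := by
      funext s
      rw [heq s, conjSup_hsNorm e hU]
    rw [this]
    exact main0

end LiouvilleFormalization
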